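/- For any odd prime p with n = (p-1)/2, the double sum S_1 = sum over i,j from 0 to n of S(i,j) is congruent to 2*(-1)^n - (p/3) modulo p. -/

import Mathlib

open Finset
open Nat

/-- The super Catalan numbers `S(m,n) = C(2m,m)·C(2n,n)/C(m+n,m)` (the division is exact). -/
def superCatalan (m n : ℕ) : ℕ :=
  (Nat.choose (2 * m) m * Nat.choose (2 * n) n) / Nat.choose (m + n) m

noncomputable def scq (i j : ℕ) : ℚ :=
  ((2*i) ! * (2*j) ! : ℚ) / ((i) ! * (j) ! * ((i+j)) !)

lemma fact_pos' (m : ℕ) : (0:ℚ) < ((m) ! : ℚ) := by exact_mod_cast Nat.factorial_pos m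

lemma scq_rec (i j : ℕ) : scq (i+1) j + scq i (j+1) = 4 * scq i j := by
  unfold scq
  have h1 : 2*(i+1) = 2*i+1+1 := by ring
  have h2 : 2*(j+1) = 2*j+1+1 := by ring
  rw [h1, h2]
  have e1 : ((2*i+1+1) ! : ℚ) = (2*i+2)*(2*i+1)*(2*i) ! := by
    rw [Nat.factorial_succ, Nat.factorial_succ]; push_cast; ring
  have e2 : ((2*j+1+1) ! : ℚ) = (2*j+2)*(2*j+1)*(2*j) ! := by
    rw [Nat.factorial_succ, Nat.factorial_succ]; push_cast; ring
  have e3 : ((i+1) ! : ℚ) = (i+1)*(i) ! := by rw [Nat.factorial_succ]; push_cast; ring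
  have e4 : ((j+1) ! : ℚ) = (j+1)*(j) ! := by rw [Nat.factorial_succ]; push_cast; ring
  have e5 : ((i+1+j) ! : ℚ) = (i+j+1)*((i+j)) ! := by
    have : i+1+j = (i+j)+1 := by ring
    rw [this, Nat.factorial_succ]; push_cast; ring
  have e6 : ((i+(j+1)) ! : ℚ) = (i+j+1)*((i+j)) ! := by
    have : i+(j+1) = (i+j)+1 := by ring
    rw [this, Nat.factorial_succ]; push_cast; ring
  rw [e1, e2, e3, e4, e5, e6]
  have hi := fact_pos' i
  have hj := fact_pos' j
  have hij := fact_pos' (i+j)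
  field_simp
  ring


lemma choose_cast_mul (a b : ℕ) : ((a+b).choose a : ℚ) * ((a) ! * (b) !) = ((a+b)) ! := by
  have h0 := Nat.choose_mul_factorial_mul_factorial (Nat.le_add_right a b)
  have h : a + b - a = b := by omega
  rw [h] at h0
  have h1 : (a+b).choose a * ((a) ! * (b) !) = ((a+b)) ! := by rw [← mul_assoc]; exact h0
  exact_mod_cast h1

lemma scq_mul_choose (i j : ℕ) :
    scq i j * ((i+j).choose i : ℚ) = ((2*i).choose i : ℚ) * ((2*j).choose j : ℚ) := by
  have h1 := choose_cast_mul i j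
  have h2 : ((2*i).choose i : ℚ) * ((i) ! * (i) !) = ((2*i)) ! := by
    have := Nat.choose_mul_factorial_mul_factorial (show i ≤ 2*i by omega)
    have h : 2*i - i = i := by omega
    rw [h] at this
    have h1 : (2*i).choose i * ((i) ! * (i) !) = ((2*i)) ! := by rw [← mul_assoc]; exact this
    exact_mod_cast h1
  have h3 : ((2*j).choose j : ℚ) * ((j) ! * (j) !) = ((2*j)) ! := by
    have := Nat.choose_mul_factorial_mul_factorial (show j ≤ 2*j by omega)
    have h : 2*j - j = j := by omega
    rw [h] at this
    have h1 : (2*j).choose j * ((j) ! * (j) !) = ((2*j)) ! := by rw [← mul_assoc]; exact this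
    exact_mod_cast h1
  have hi := fact_pos' i
  have hj := fact_pos' j
  have hij := fact_pos' (i+j)
  rw [scq]
  rw [div_mul_eq_mul_div, div_eq_iff (by positivity)]
  rw [← h2, ← h3, ← h1]; ring

lemma scq_zero (j : ℕ) : scq 0 j = ((2*j).choose j : ℚ) := by
  have h3 : ((2*j).choose j : ℚ) * ((j) ! * (j) !) = ((2*j)) ! := by
    have := Nat.choose_mul_factorial_mul_factorial (show j ≤ 2*j by omega)
    have h : 2*j - j = j := by omega
    rw [h] at this
    have h1 : (2*j).choose j * ((j) ! * (j) !) = ((2*j)) ! := by rw [← mul_assoc]; exact this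
    exact_mod_cast h1
  have hj := fact_pos' j
  rw [scq]
  rw [div_eq_iff (by positivity)]
  simp [Nat.factorial_zero] at *
  nlinarith [h3]

lemma scq_nonneg (i j : ℕ) : 0 ≤ scq i j := by
  unfold scq; positivity

lemma scq_nat : ∀ i j : ℕ, ∃ m : ℕ, scq i j = (m : ℚ) := by
  intro i
  induction i with
  | zero => intro j; exact ⟨(2*j).choose j, scq_zero j⟩
  | succ i ih =>
    intro j
    obtain ⟨m, hm⟩ := ih j
    obtain ⟨m', hm'⟩ := ih (j+1)
    have hrec := scq_rec i j
    have hle : m' ≤ 4 * m := by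
      have h0 := scq_nonneg (i+1) j
      have : (m' : ℚ) ≤ 4 * m := by rw [← hm, ← hm']; linarith
      exact_mod_cast this
    refine ⟨4*m - m', ?_⟩
    have : scq (i+1) j = 4 * (m:ℚ) - m' := by rw [← hm, ← hm']; linarith
    rw [this]; push_cast [hle]; ring

lemma superCatalan_eq (i j : ℕ) : (superCatalan i j : ℚ) = scq i j := by
  obtain ⟨m, hm⟩ := scq_nat i j
  have key : m * (i+j).choose i = (2*i).choose i * (2*j).choose j := by
    have := scq_mul_choose i j
    rw [hm] at this
    exact_mod_cast this
  have hpos : 0 < (i+j).choose i := Nat.choose_pos (Nat.le_add_right i j)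
  have : superCatalan i j = m := by
    unfold superCatalan
    rw [← key, Nat.mul_div_cancel _ hpos]
  rw [this, hm]

lemma superCatalan_mul (i j : ℕ) :
    superCatalan i j * (i+j).choose i = (2*i).choose i * (2*j).choose j := by
  have := scq_mul_choose i j
  rw [← superCatalan_eq] at this
  exact_mod_cast this

lemma superCatalan_rec (i j : ℕ) :
    superCatalan (i+1) j + superCatalan i (j+1) = 4 * superCatalan i j := by
  have := scq_rec i j
  rw [← superCatalan_eq, ← superCatalan_eq, ← superCatalan_eq] at this
  exact_mod_cast this

lemma superCatalan_zero_left (j : ℕ) : superCatalan 0 j = (2*j).choose j := by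
  have := scq_zero j
  rw [← superCatalan_eq] at this
  exact_mod_cast this

lemma superCatalan_comm (i j : ℕ) : superCatalan i j = superCatalan j i := by
  unfold superCatalan
  have h : (j+i).choose i = (j+i).choose j := by
    rw [← Nat.choose_symm (show i ≤ j+i by omega)]
    congr 1
    omega
  rw [Nat.mul_comm ((2*i).choose i), Nat.add_comm i j, h]

lemma superCatalan_zero_right (i : ℕ) : superCatalan i 0 = (2*i).choose i := by
  rw [superCatalan_comm, superCatalan_zero_left]


section Zp
variable {p : ℕ} [hfp : Fact p.Prime] {n : ℕ} (hn : p = 2*n+1)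

lemma zfact_ne {m : ℕ} (hm : m < p) : ((m ! : ℕ) : ZMod p) ≠ 0 := by
  rw [Ne, ZMod.natCast_eq_zero_iff]
  intro h
  exact absurd (hfp.out.dvd_factorial.mp h) (by omega)

lemma zchoose_ne {a b : ℕ} (ha : a < p) (hb : b ≤ a) : ((a.choose b : ℕ) : ZMod p) ≠ 0 := by
  intro h
  rw [ZMod.natCast_eq_zero_iff] at h
  have := Nat.choose_mul_factorial_mul_factorial hb
  have hdvd : p ∣ a ! := by
    rw [← this]
    exact Dvd.dvd.mul_right (Dvd.dvd.mul_right h _) _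
  exact absurd (hfp.out.dvd_factorial.mp hdvd) (by omega)

lemma scat_cast (i j : ℕ) :
    ((superCatalan i j : ℕ) : ZMod p) * (((i+j).choose i : ℕ) : ZMod p)
      = (((2*i).choose i : ℕ) : ZMod p) * (((2*j).choose j : ℕ) : ZMod p) := by
  exact_mod_cast congrArg (Nat.cast (R := ZMod p)) (superCatalan_mul i j)


def Dd (p n s : ℕ) : ZMod p :=
  ∑ i ∈ Finset.Icc (s - n) (min s n), ((superCatalan i (s - i) : ℕ) : ZMod p)








lemma frec (p i j : ℕ) :
    ((superCatalan (i+1) j : ℕ) : ZMod p) + ((superCatalan i (j+1) : ℕ) : ZMod p)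
      = 4 * ((superCatalan i j : ℕ) : ZMod p) := by
  exact_mod_cast congrArg (Nat.cast (R := ZMod p)) (superCatalan_rec i j)

lemma sum_square_eq_sum_Dd :
    (∑ i ∈ Finset.range (n+1), ∑ j ∈ Finset.range (n+1),
        ((superCatalan i j : ℕ) : ZMod p))
      = ∑ s ∈ Finset.range (2*n+1), Dd p n s := by
  have step1 : ∀ s, Dd p n s
      = ∑ i ∈ Finset.range (n+1),
          (if s - n ≤ i ∧ i ≤ s then ((superCatalan i (s - i) : ℕ) : ZMod p) else 0) := by
    intro s
    rw [Dd, ← Finset.sum_filter]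
    apply Finset.sum_congr
    · ext i
      simp only [Finset.mem_Icc, Finset.mem_filter, Finset.mem_range]
      omega
    · intros; rfl
  simp_rw [step1]
  conv_rhs => rw [Finset.sum_comm]
  apply Finset.sum_congr rfl
  intro i hi
  rw [Finset.mem_range] at hi
  rw [← Finset.sum_filter]
  have hfilter : Finset.filter (fun s => s - n ≤ i ∧ i ≤ s) (Finset.range (2*n+1))
      = Finset.Ico i (i+n+1) := by
    ext s
    simp only [Finset.mem_filter, Finset.mem_range, Finset.mem_Ico]
    omega
  rw [hfilter, Finset.sum_Ico_eq_sum_range]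
  have harg : i + n + 1 - i = n + 1 := by omega
  rw [harg]
  apply Finset.sum_congr rfl
  intro j _
  congr 2 <;> omega

lemma Dd_eq_low {s : ℕ} (hs : s ≤ n) :
    Dd p n s = ∑ i ∈ Finset.range (s+1), ((superCatalan i (s - i) : ℕ) : ZMod p) := by
  rw [Dd]
  apply Finset.sum_congr
  · ext i
    simp only [Finset.mem_Icc, Finset.mem_range]
    omega
  · intros; rfl

lemma Dd_eq_high {t : ℕ} (ht : t ≤ n) :
    Dd p n (n+t) = ∑ k ∈ Finset.range (n-t+1), ((superCatalan (t+k) (n-k) : ℕ) : ZMod p) := by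
  rw [Dd]
  have hicc : Finset.Icc (n+t-n) (min (n+t) n) = Finset.Ico t (n+1) := by
    ext i
    simp only [Finset.mem_Icc, Finset.mem_Ico]
    omega
  rw [hicc, Finset.sum_Ico_eq_sum_range]
  have harg : n + 1 - t = n - t + 1 := by omega
  rw [harg]
  apply Finset.sum_congr rfl
  intro k _
  congr 2 <;> omega


include hn


lemma two_ne' : (2 : ZMod p) ≠ 0 := by
  have : ((2:ℕ) : ZMod p) ≠ 0 := by
    rw [Ne, ZMod.natCast_eq_zero_iff]
    intro h
    have h1 := Nat.le_of_dvd (by norm_num) h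
    have h2 := hfp.out.two_le
    omega
  exact_mod_cast this

lemma cb_eq {k : ℕ} (hk : k ≤ n) :
    (((2*k).choose k : ℕ) : ZMod p) = (-4)^k * ((n.choose k : ℕ) : ZMod p) := by
  induction k with
  | zero => simp
  | succ k ih =>
    have hk' : k ≤ n := by omega
    have ihk := ih hk'
    have h1 : ((k+1 : ℕ) : ZMod p) ≠ 0 := by
      have : ((k+1)! : ℕ) = (k+1) * (k !) := rfl
      have h2 := zfact_ne (p := p) (m := k+1) (by omega)
      rw [this] at h2
      push_cast at h2 ⊢
      exact fun h => h2 (by rw [h, zero_mul])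
    -- Nat identity 1
    have e1 : ((k:ℕ)+1) * Nat.centralBinom (k+1) = 2 * (2*k+1) * Nat.centralBinom k :=
      Nat.succ_mul_centralBinom_succ k
    have e1' : (((k:ZMod p))+1) * (((2*(k+1)).choose (k+1) : ℕ) : ZMod p)
        = 2 * (2*(k:ZMod p)+1) * (((2*k).choose k : ℕ) : ZMod p) := by
      have : ((2*(k+1)).choose (k+1) : ℕ) = Nat.centralBinom (k+1) := rfl
      rw [this]
      have : ((2*k).choose k : ℕ) = Nat.centralBinom k := rfl
      rw [this]
      exact_mod_cast congrArg (Nat.cast (R := ZMod p)) e1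
    -- Nat identity 2
    have e2 : n.choose (k+1) * (k+1) = n.choose k * (n - k) := Nat.choose_succ_right_eq n k
    have e2' : ((n.choose (k+1) : ℕ) : ZMod p) * ((k:ZMod p)+1)
        = ((n.choose k : ℕ) : ZMod p) * ((n:ZMod p) - (k:ZMod p)) := by
      have hcast : ((n - k : ℕ) : ZMod p) = (n:ZMod p) - (k:ZMod p) := by
        rw [Nat.cast_sub hk']
      rw [← hcast]
      exact_mod_cast congrArg (Nat.cast (R := ZMod p)) e2
    have hrel : 2 * ((n:ZMod p) - (k:ZMod p)) = -(2*(k:ZMod p)+1) := by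
      have hp0 : ((2*n+1 : ℕ) : ZMod p) = 0 := by
        rw [← hn]; exact ZMod.natCast_self p
      push_cast at hp0
      linear_combination hp0
    have h2 := two_ne' hn
    apply mul_left_cancel₀ h1
    apply mul_left_cancel₀ h2
    push_cast at e1' ⊢
    calc 2 * (((k:ZMod p)+1) * (((2*(k+1)).choose (k+1) : ℕ) : ZMod p))
        = 2 * (2 * (2*(k:ZMod p)+1) * (((2*k).choose k : ℕ) : ZMod p)) := by rw [e1']
      _ = 2 * (2 * (2*(k:ZMod p)+1) * ((-4)^k * ((n.choose k : ℕ) : ZMod p))) := by rw [ihk]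
      _ = (-4)^(k+1) * (-(2*(k:ZMod p)+1)) * ((n.choose k : ℕ) : ZMod p) := by ring
      _ = (-4)^(k+1) * (2 * ((n:ZMod p) - (k:ZMod p))) * ((n.choose k : ℕ) : ZMod p) := by rw [hrel]
      _ = 2 * ((-4)^(k+1) * (((n.choose k : ℕ) : ZMod p) * ((n:ZMod p) - (k:ZMod p)))) := by ring
      _ = 2 * ((-4)^(k+1) * (((n.choose (k+1) : ℕ) : ZMod p) * ((k:ZMod p)+1))) := by rw [e2']
      _ = 2 * (((k:ZMod p)+1) * ((-4)^(k+1) * ((n.choose (k+1) : ℕ) : ZMod p))) := by ring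


lemma f_diag {i : ℕ} (hi : i ≤ n) :
    ((superCatalan i (n - i) : ℕ) : ZMod p) = (-4)^n * ((n.choose i : ℕ) : ZMod p) := by
  have hij : i + (n - i) = n := by omega
  have h := scat_cast (p := p) i (n - i)
  rw [hij] at h
  have hcb1 := cb_eq hn hi
  have hcb2 := cb_eq hn (show n - i ≤ n by omega)
  have hsymm : n.choose (n - i) = n.choose i := Nat.choose_symm hi
  rw [hcb1, hcb2, hsymm] at h
  have hne : ((n.choose i : ℕ) : ZMod p) ≠ 0 := zchoose_ne (by omega) hi
  apply mul_right_cancel₀ hne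
  rw [h]
  have hpow : (-4 : ZMod p)^i * (-4 : ZMod p)^(n-i) = (-4)^n := by
    rw [← pow_add, hij]
  calc ((-4:ZMod p))^i * ((n.choose i : ℕ) : ZMod p) * ((-4)^(n-i) * ((n.choose i : ℕ) : ZMod p))
      = ((-4:ZMod p))^i * (-4)^(n-i) * (((n.choose i : ℕ) : ZMod p) * ((n.choose i : ℕ) : ZMod p)) := by ring
    _ = (-4)^n * (((n.choose i : ℕ) : ZMod p) * ((n.choose i : ℕ) : ZMod p)) := by rw [hpow]
    _ = (-4)^n * ((n.choose i : ℕ) : ZMod p) * ((n.choose i : ℕ) : ZMod p) := by ring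

lemma cb_top_dvd (hn1 : 1 ≤ n) : p ∣ (2*(n+1)).choose (n+1) := by
  have h : (2*(n+1)).choose (n+1) = (2*n+1).choose n + (2*n+1).choose (n+1) := by
    have : 2*(n+1) = (2*n+1) + 1 := by ring
    rw [this, Nat.choose_succ_succ']
  rw [h, ← hn]
  have d1 : p ∣ p.choose n := hfp.out.dvd_choose_self (by omega) (by omega)
  have d2 : p ∣ p.choose (n+1) := hfp.out.dvd_choose_self (by omega) (by omega)
  exact Nat.dvd_add d1 d2

lemma f_top {t : ℕ} (hn1 : 1 ≤ n) (ht : t + 1 ≤ n) :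
    ((superCatalan (n+1) t : ℕ) : ZMod p) = 0 := by
  have h := scat_cast (p := p) (n+1) t
  have hz : (((2*(n+1)).choose (n+1) : ℕ) : ZMod p) = 0 := by
    rw [ZMod.natCast_eq_zero_iff]
    exact cb_top_dvd hn hn1
  rw [hz, zero_mul] at h
  have hne : ((((n+1)+t).choose (n+1) : ℕ) : ZMod p) ≠ 0 :=
    zchoose_ne (by omega) (by omega)
  exact (mul_eq_zero.mp h).resolve_right hne

lemma f_top' {t : ℕ} (hn1 : 1 ≤ n) (ht : t + 1 ≤ n) :
    ((superCatalan t (n+1) : ℕ) : ZMod p) = 0 := by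
  rw [superCatalan_comm]
  exact f_top hn hn1 ht


lemma Dd_succ_low {s : ℕ} (hs : s + 1 ≤ n) :
    Dd p n (s+1) = 2 * Dd p n s + (((2*(s+1)).choose (s+1) : ℕ) : ZMod p) := by
  have key : 4 * Dd p n s = 2 * Dd p n (s+1) - 2 * (((2*(s+1)).choose (s+1) : ℕ) : ZMod p) := by
    rw [Dd_eq_low (p := p) (by omega : s ≤ n), Finset.mul_sum]
    have point : ∀ i ∈ Finset.range (s+1),
        4 * ((superCatalan i (s - i) : ℕ) : ZMod p)
          = ((superCatalan (i+1) (s - i) : ℕ) : ZMod p)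
            + ((superCatalan i ((s+1) - i) : ℕ) : ZMod p) := by
      intro i hi
      rw [Finset.mem_range] at hi
      have h1 : (s+1) - i = (s - i) + 1 := by omega
      rw [h1, frec]
    rw [Finset.sum_congr rfl point, Finset.sum_add_distrib]
    set g : ℕ → ZMod p := fun i => ((superCatalan i ((s+1) - i) : ℕ) : ZMod p) with hg
    have hA : (∑ i ∈ Finset.range (s+1), ((superCatalan (i+1) (s - i) : ℕ) : ZMod p))
        = ∑ i ∈ Finset.range (s+1), g (i+1) := by
      apply Finset.sum_congr rfl
      intro i _
      simp only [hg]
      congr 2 <;> omega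
    have hsum' : ∑ i ∈ Finset.range (s+2), g i = (∑ i ∈ Finset.range (s+1), g (i+1)) + g 0 :=
      Finset.sum_range_succ' g (s+1)
    have hsum : ∑ i ∈ Finset.range (s+2), g i = (∑ i ∈ Finset.range (s+1), g i) + g (s+1) :=
      Finset.sum_range_succ g (s+1)
    have hD1 : Dd p n (s+1) = ∑ i ∈ Finset.range (s+2), g i := Dd_eq_low (p := p) hs
    have hg0 : g 0 = (((2*(s+1)).choose (s+1) : ℕ) : ZMod p) := by
      simp only [hg, Nat.sub_zero, superCatalan_zero_left]
    have hgs : g (s+1) = (((2*(s+1)).choose (s+1) : ℕ) : ZMod p) := by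
      simp only [hg, Nat.sub_self, superCatalan_zero_right]
    rw [hA]
    have e1 : (∑ i ∈ Finset.range (s+1), g (i+1)) = Dd p n (s+1) - g 0 := by
      rw [hD1, hsum']; ring
    have e2 : (∑ i ∈ Finset.range (s+1), g i) = Dd p n (s+1) - g (s+1) := by
      rw [hD1, hsum]; ring
    rw [e1, e2, hg0, hgs]; ring
  have h2 := two_ne' hn
  apply mul_left_cancel₀ h2
  linear_combination -key

lemma Dd_succ_high {t : ℕ} (hn1 : 1 ≤ n) (ht : t + 1 ≤ n) :
    Dd p n (n+t+1) = 2 * Dd p n (n+t) := by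
  have key : 4 * Dd p n (n+t) = 2 * Dd p n (n+(t+1)) := by
    rw [Dd_eq_high (p := p) (by omega : t ≤ n), Finset.mul_sum]
    have point : ∀ k ∈ Finset.range (n-t+1),
        4 * ((superCatalan (t+k) (n-k) : ℕ) : ZMod p)
          = ((superCatalan (t+k+1) (n-k) : ℕ) : ZMod p)
            + ((superCatalan (t+k) ((n+1) - k) : ℕ) : ZMod p) := by
      intro k hk
      rw [Finset.mem_range] at hk
      have h1 : (n+1) - k = (n - k) + 1 := by omega
      rw [h1, frec]
    rw [Finset.sum_congr rfl point, Finset.sum_add_distrib]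
    have hD1 : Dd p n (n+(t+1))
        = ∑ k ∈ Finset.range (n-t), ((superCatalan (t+1+k) (n-k) : ℕ) : ZMod p) := by
      rw [Dd_eq_high (p := p) (by omega : t+1 ≤ n)]
      have harg : n - (t+1) + 1 = n - t := by omega
      rw [harg]
    have hA : (∑ k ∈ Finset.range (n-t+1), ((superCatalan (t+k+1) (n-k) : ℕ) : ZMod p))
        = Dd p n (n+(t+1)) := by
      have hsplit := Finset.sum_range_succ
        (fun k => ((superCatalan (t+k+1) (n-k) : ℕ) : ZMod p)) (n-t)
      rw [hsplit, hD1]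
      have hzero : ((superCatalan (t+(n-t)+1) (n-(n-t)) : ℕ) : ZMod p) = 0 := by
        have e1 : t+(n-t)+1 = n+1 := by omega
        have e2 : n-(n-t) = t := by omega
        rw [e1, e2]
        exact f_top hn hn1 ht
      rw [hzero, add_zero]
      apply Finset.sum_congr rfl
      intro k _
      congr 2 <;> omega
    have hB : (∑ k ∈ Finset.range (n-t+1), ((superCatalan (t+k) ((n+1)-k) : ℕ) : ZMod p))
        = Dd p n (n+(t+1)) := by
      have hsplit := Finset.sum_range_succ'
        (fun k => ((superCatalan (t+k) ((n+1)-k) : ℕ) : ZMod p)) (n-t)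
      rw [hsplit, hD1]
      have hzero : ((superCatalan (t+0) ((n+1)-0) : ℕ) : ZMod p) = 0 := by
        simp only [Nat.add_zero, Nat.sub_zero]
        exact f_top' hn hn1 ht
      rw [hzero, add_zero]
      apply Finset.sum_congr rfl
      intro k _
      congr 2 <;> omega
    rw [hA, hB]; ring
  have h2 := two_ne' hn
  apply mul_left_cancel₀ h2
  have : n + t + 1 = n + (t+1) := by omega
  rw [this]
  linear_combination -key

lemma Dd_n_val :
    Dd p n n = (-4)^n * 2^n := by
  have : Dd p n n = ∑ i ∈ Finset.range (n+1), ((superCatalan i (n - i) : ℕ) : ZMod p) :=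
    Dd_eq_low (p := p) (le_refl n)
  rw [this]
  have point : ∀ i ∈ Finset.range (n+1),
      ((superCatalan i (n - i) : ℕ) : ZMod p) = (-4)^n * ((n.choose i : ℕ) : ZMod p) := by
    intro i hi
    rw [Finset.mem_range] at hi
    exact f_diag hn (by omega)
  rw [Finset.sum_congr rfl point, ← Finset.mul_sum]
  congr 1
  have := Nat.sum_range_choose n
  calc (∑ i ∈ Finset.range (n+1), ((n.choose i : ℕ) : ZMod p))
      = (((∑ i ∈ Finset.range (n+1), n.choose i : ℕ)) : ZMod p) := by push_cast; rfl
    _ = ((2^n : ℕ) : ZMod p) := by rw [this]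
    _ = 2^n := by push_cast; rfl

lemma Dd_high_pow {t : ℕ} (hn1 : 1 ≤ n) (ht : t ≤ n) :
    Dd p n (n+t) = 2^t * Dd p n n := by
  induction t with
  | zero => simp
  | succ t ih =>
    have h1 : n + (t+1) = (n + t) + 1 := by omega
    rw [h1, Dd_succ_high hn hn1 (by omega), ih (by omega)]
    ring

lemma sum_Dd_low {m : ℕ} (hm : m ≤ n) :
    ∑ s ∈ Finset.range m, Dd p n s
      = Dd p n m - ∑ k ∈ Finset.range (m+1), (((2*k).choose k : ℕ) : ZMod p) := by
  induction m with
  | zero =>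
    have hD0 : Dd p n 0 = 1 := by
      rw [Dd_eq_low (p := p) (by omega)]
      simp [superCatalan_zero_left]
    simp [hD0]
  | succ m ih =>
    rw [Finset.sum_range_succ, ih (by omega),
      Dd_succ_low hn (by omega : m + 1 ≤ n),
      Finset.sum_range_succ (fun k => (((2*k).choose k : ℕ) : ZMod p)) (m+1)]
    ring



end Zp

theorem stmt13 (p : ℕ) (hp : p.Prime) (hodd : Odd p) :
    (↑(∑ i ∈ Finset.range ((p - 1) / 2 + 1), ∑ j ∈ Finset.range ((p - 1) / 2 + 1),
          superCatalan i j) : ZMod p) =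
      2 * (-1 : ZMod p) ^ ((p - 1) / 2) - (legendreSym 3 p : ZMod p) := by
  haveI : Fact p.Prime := ⟨hp⟩
  haveI : Fact (Nat.Prime 3) := ⟨by norm_num⟩
  have hp2 : p ≠ 2 := by
    intro h
    rw [h] at hodd
    exact absurd hodd (by decide)
  have hp3 : 3 ≤ p := by
    have := hp.two_le
    omega
  set n := (p - 1) / 2 with hndef
  have hn : p = 2*n+1 := by
    obtain ⟨m, hm⟩ := hodd
    omega
  have hn1 : 1 ≤ n := by omega
  -- cast the sum
  have hcast : (↑(∑ i ∈ Finset.range (n+1), ∑ j ∈ Finset.range (n+1),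
        superCatalan i j) : ZMod p)
      = ∑ i ∈ Finset.range (n+1), ∑ j ∈ Finset.range (n+1),
          ((superCatalan i j : ℕ) : ZMod p) := by
    push_cast
    rfl
  rw [hcast, sum_square_eq_sum_Dd]
  -- split the range
  have hsplit : (∑ s ∈ Finset.range (2*n+1), Dd p n s)
      = (∑ s ∈ Finset.range n, Dd p n s) + ∑ t ∈ Finset.range (n+1), Dd p n (n+t) := by
    rw [show 2*n+1 = n + (n+1) by ring, Finset.sum_range_add]
  rw [hsplit, sum_Dd_low hn (le_refl n)]
  have hhigh : (∑ t ∈ Finset.range (n+1), Dd p n (n+t))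
      = (∑ t ∈ Finset.range (n+1), (2:ZMod p)^t) * Dd p n n := by
    rw [Finset.sum_mul]
    apply Finset.sum_congr rfl
    intro t ht
    rw [Finset.mem_range] at ht
    rw [Dd_high_pow hn hn1 (by omega)]
  have geo : ∀ m : ℕ, (∑ t ∈ Finset.range m, (2:ZMod p)^t) = 2^m - 1 := by
    intro m
    induction m with
    | zero => simp
    | succ m ih => rw [Finset.sum_range_succ, ih]; ring
  rw [hhigh, geo, Dd_n_val hn]
  -- the central binomial sum
  have hCB : (∑ k ∈ Finset.range (n+1), (((2*k).choose k : ℕ) : ZMod p)) = (-3 : ZMod p)^n := by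
    have h1 : ∀ k ∈ Finset.range (n+1),
        (((2*k).choose k : ℕ) : ZMod p) = (-4:ZMod p)^k * 1^(n-k) * (n.choose k : ZMod p) := by
      intro k hk
      rw [Finset.mem_range] at hk
      rw [cb_eq hn (by omega)]
      ring
    rw [Finset.sum_congr rfl h1, ← add_pow (-4 : ZMod p) 1 n]
    norm_num
  rw [hCB]
  -- Fermat
  have h2ne : (2 : ZMod p) ≠ 0 := two_ne' hn
  have hferm : (2 : ZMod p)^(2*n) = 1 := by
    rw [show 2*n = p - 1 by omega]
    exact ZMod.pow_card_sub_one_eq_one h2ne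
  have hmain : ((-4:ZMod p)^n * 2^n - (-3)^n + (2 ^ (n + 1) - 1) * ((-4)^n * 2^n))
      = 2 * (-1:ZMod p)^n - (-3:ZMod p)^n := by
    have e1 : ((-4:ZMod p)^n * 2^n - (-3)^n + (2 ^ (n + 1) - 1) * ((-4)^n * 2^n))
        = 2 * ((-1:ZMod p)^n * (2^(2*n) * 2^(2*n))) - (-3)^n := by
      rw [show (-4:ZMod p)^n = (-1)^n * 4^n by rw [← mul_pow]; norm_num,
        show (4:ZMod p)^n = 2^(2*n) by rw [pow_mul]; norm_num]
      ring
    rw [e1, hferm]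
    ring
  rw [hmain]
  -- now handle the Legendre symbol
  congr 1
  by_cases hp3' : p = 3
  · subst hp3'
    have hn' : n = 1 := by omega
    rw [hn']
    have hz : legendreSym 3 ((3:ℕ):ℤ) = 0 := by
      refine (legendreSym.eq_zero_iff 3 ((3:ℕ):ℤ)).mpr ?_
      have h1 : (((3:ℕ):ℤ) : ZMod 3) = ((3:ℕ) : ZMod 3) := by push_cast; rfl
      rw [h1, ZMod.natCast_self]
    rw [hz]
    rw [pow_one]
    have h2 : (3:ZMod 3) = ((3:ℕ):ZMod 3) := by norm_cast
    rw [show (-3 : ZMod 3) = -((3:ℕ):ZMod 3) by rw [← h2], ZMod.natCast_self, neg_zero]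
    push_cast
    rfl
  · -- p ≠ 3
    have hLsq : legendreSym 3 p ^ 2 = 1 := by
      apply legendreSym.sq_one
      have : (((p:ℕ) : ℤ) : ZMod 3) = ((p : ℕ) : ZMod 3) := by push_cast; rfl
      rw [this, Ne, ZMod.natCast_eq_zero_iff]
      intro hdvd
      exact hp3' ((Nat.prime_dvd_prime_iff_eq (by norm_num) hp).mp hdvd).symm
    have hQR : legendreSym 3 (p:ℤ) * legendreSym p 3 = (-1)^n := by
      have h := legendreSym.quadratic_reciprocity (p := p) (q := 3) hp2 (by norm_num)
        (fun h => hp3' h)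
      simp only [Nat.cast_ofNat] at h
      rw [h]
      congr 1
      have : p / 2 = n := by omega
      rw [this]
      norm_num
    have hLp3 : legendreSym p 3 = (-1)^n * legendreSym 3 p := by
      have h := congrArg (fun x => legendreSym 3 p * x) hQR
      calc legendreSym p 3 = (legendreSym 3 p ^ 2) * legendreSym p 3 := by rw [hLsq]; ring
        _ = legendreSym 3 p * (legendreSym 3 p * legendreSym p 3) := by ring
        _ = legendreSym 3 p * (-1)^n := by rw [hQR]
        _ = (-1)^n * legendreSym 3 p := by ring
    have hEuler : ((legendreSym p 3 : ℤ) : ZMod p) = (3 : ZMod p)^n := by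
      rw [legendreSym.eq_pow]
      have : p / 2 = n := by omega
      rw [this]
      norm_num
    have h3n : ((-3:ZMod p))^n = (-1:ZMod p)^n * (3:ZMod p)^n := by
      rw [← mul_pow]; norm_num
    rw [h3n, ← hEuler, hLp3]
    push_cast
    have hone : (-1:ZMod p)^n * (-1:ZMod p)^n = 1 := by
      rw [← pow_add, show n+n = 2*n by ring, pow_mul]
      norm_num
    rw [← mul_assoc, hone, one_mul]
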